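/- Let (α_k)_{k∈ℕ} be positive real numbers with ∑_{k=0}^∞ α_k = ∞, let M > 0, and let (x_k)_{k∈ℕ} be a sequence in ℝⁿ such that ∑_{k=0}^∞ α_k·‖∇F(x_k)‖² < ∞ and ‖x_{k+1} − x_k‖ ≤ M·α_k for all k. Then every cluster point x̄ of the sequence (x_k) satisfies ∇F(x̄) = 0. -/

import Mathlib

open Filter

theorem stmt_12 {n : ℕ} (hn : 1 ≤ n)
    (F : EuclideanSpace ℝ (Fin n) → ℝ) (hF : ContDiff ℝ 1 F)
    (α : ℕ → ℝ) (hα : ∀ k, 0 < α k)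
    (hαsum : Tendsto (fun N => ∑ k ∈ Finset.range N, α k) atTop atTop)
    (M : ℝ) (hM : 0 < M)
    (x : ℕ → EuclideanSpace ℝ (Fin n))
    (hsum : Summable (fun k => α k * ‖gradient F (x k)‖ ^ 2))
    (hstep : ∀ k, ‖x (k + 1) - x k‖ ≤ M * α k) :
    ∀ xbar : EuclideanSpace ℝ (Fin n), MapClusterPt xbar atTop x → gradient F xbar = 0 := by
  intro xbar hcl
  by_contra hg0
  -- continuity of the gradient
  have hcont : Continuous (gradient F) := by
    have h1 : Continuous (fderiv ℝ F) := hF.continuous_fderiv one_ne_zero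
    exact ((InnerProductSpace.toDual ℝ (EuclideanSpace ℝ (Fin n))).symm.continuous.comp h1 : _)
  set g := ‖gradient F xbar‖ with hg
  have hgpos : 0 < g := norm_pos_iff.mpr hg0
  -- neighborhood where gradient is large
  have hev : ∀ᶠ y in nhds xbar, g / 2 < ‖gradient F y‖ := by
    have ht : Filter.Tendsto (fun y => ‖gradient F y‖) (nhds xbar) (nhds g) :=
      (hcont.norm.continuousAt : _)
    exact ht (Ioi_mem_nhds (by linarith))
  obtain ⟨δ, hδpos, hδ⟩ := Metric.eventually_nhds_iff.1 hev
  -- choose k₁ with small tail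
  set a : ℕ → ℝ := fun k => α k * ‖gradient F (x k)‖ ^ 2 with ha
  have hanonneg : ∀ k, 0 ≤ a k := fun k => mul_nonneg (hα k).le (sq_nonneg _)
  set ε : ℝ := (g / 2) ^ 2 * (δ / (8 * M)) with hε
  have hεpos : 0 < ε := by positivity
  have htail : Tendsto (fun i => ∑' k, a (k + i)) atTop (nhds 0) :=
    tendsto_sum_nat_add a
  obtain ⟨k₁, hk₁⟩ := (htail.eventually (eventually_lt_nhds hεpos)).exists
  -- choose k₀ ≥ k₁ close to xbar
  have hfreq : ∃ᶠ k in atTop, x k ∈ Metric.ball xbar (δ / 4) :=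
    (mapClusterPt_iff_frequently.1 hcl) _ (Metric.ball_mem_nhds _ (by linarith))
  obtain ⟨k₀, hk₀ge, hk₀ball⟩ := (frequently_atTop.1 hfreq) k₁
  have hk₀dist : ‖x k₀ - xbar‖ < δ / 4 := by
    rw [← dist_eq_norm]; exact hk₀ball
  -- finite tail sums are bounded by ε
  have hfin : ∀ k, ∑ j ∈ Finset.Ico k₀ k, a j < ε := by
    intro k
    rcases le_or_gt k k₀ with h | h
    · rw [Finset.Ico_eq_empty (by omega)]; simpa using hεpos
    calc ∑ j ∈ Finset.Ico k₀ k, a j ≤ ∑ j ∈ Finset.Ico k₁ k, a j := by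
          apply Finset.sum_le_sum_of_subset_of_nonneg
          · exact Finset.Ico_subset_Ico hk₀ge le_rfl
          · intro i _ _; exact hanonneg i
      _ = ∑ i ∈ Finset.range (k - k₁), a (i + k₁) := by
          rw [Finset.sum_Ico_eq_sum_range]
          exact Finset.sum_congr rfl (fun i _ => by rw [add_comm])
      _ ≤ ∑' i, a (i + k₁) := by
          apply Summable.sum_le_tsum
          · intro i _; exact hanonneg _
          · exact (summable_nat_add_iff k₁).2 hsum
      _ < ε := hk₁
  -- sum bound lemma
  have hsumbound : ∀ k, (∀ i, k₀ ≤ i → i < k → ‖x i - xbar‖ < δ / 2) →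
      ∑ j ∈ Finset.Ico k₀ k, α j < δ / (8 * M) := by
    intro k hball
    have h1 : ∀ j ∈ Finset.Ico k₀ k, α j * (g / 2) ^ 2 ≤ a j := by
      intro j hj
      rw [Finset.mem_Ico] at hj
      have hd : dist (x j) xbar < δ := by
        rw [dist_eq_norm]
        have := hball j hj.1 hj.2
        linarith
      have hgj : g / 2 < ‖gradient F (x j)‖ := hδ hd
      have h2 : (g / 2) ^ 2 ≤ ‖gradient F (x j)‖ ^ 2 := by nlinarith
      exact mul_le_mul_of_nonneg_left h2 (hα j).le
    have h2 : (∑ j ∈ Finset.Ico k₀ k, α j) * (g / 2) ^ 2 < ε := by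
      rw [Finset.sum_mul]
      exact lt_of_le_of_lt (Finset.sum_le_sum h1) (hfin k)
    have hgs : (0:ℝ) < (g / 2) ^ 2 := by positivity
    have h3 : ∑ j ∈ Finset.Ico k₀ k, α j < ε / (g / 2) ^ 2 := (lt_div_iff₀ hgs).2 h2
    have h4 : ε / (g / 2) ^ 2 = δ / (8 * M) := by
      rw [hε]; field_simp
    linarith
  -- trapping: the iterates stay close to xbar forever
  have hdistbound : ∀ k, k₀ ≤ k → (∀ i, k₀ ≤ i → i < k → ‖x i - xbar‖ < δ / 2) →
      dist (x k₀) (x k) < δ / 8 := by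
    intro k hk hball
    have hd : dist (x k₀) (x k) ≤ ∑ i ∈ Finset.Ico k₀ k, M * α i := by
      apply dist_le_Ico_sum_of_dist_le hk
      intro i _ _
      rw [dist_comm, dist_eq_norm]
      exact hstep i
    have : ∑ i ∈ Finset.Ico k₀ k, M * α i = M * ∑ i ∈ Finset.Ico k₀ k, α i := by
      rw [Finset.mul_sum]
    have hαb := hsumbound k hball
    have : ∑ i ∈ Finset.Ico k₀ k, M * α i < δ / 8 := by
      rw [this]
      calc M * ∑ i ∈ Finset.Ico k₀ k, α i < M * (δ / (8 * M)) :=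
            (mul_lt_mul_iff_right₀ hM).2 hαb
        _ = δ / 8 := by field_simp
    linarith
  have htrap : ∀ m : ℕ, ∀ j, k₀ ≤ j → j ≤ k₀ + m → ‖x j - xbar‖ < δ / 2 := by
    intro m
    induction m with
    | zero =>
        intro j h1 h2
        have : j = k₀ := by omega
        subst this
        linarith
    | succ m ih =>
        intro j h1 h2
        rcases le_or_gt j (k₀ + m) with h | h
        · exact ih j h1 h
        · have hj : j = k₀ + m + 1 := by omega
          have hball : ∀ i, k₀ ≤ i → i < j → ‖x i - xbar‖ < δ / 2 := by
            intro i hi1 hi2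
            exact ih i hi1 (by omega)
          have hd := hdistbound j h1 hball
          have htri : dist (x j) xbar ≤ dist (x j) (x k₀) + dist (x k₀) xbar :=
            dist_triangle _ _ _
          rw [dist_comm (x j) (x k₀)] at htri
          rw [← dist_eq_norm] at hk₀dist ⊢
          linarith
  -- final contradiction: partial sums of α are bounded
  have hball : ∀ k, k₀ ≤ k → ‖x k - xbar‖ < δ / 2 := by
    intro k hk
    exact htrap (k - k₀) k hk (by omega)
  have hbdd : ∀ k, k₀ ≤ k → ∑ j ∈ Finset.range k, α j <
      (∑ j ∈ Finset.range k₀, α j) + δ / (8 * M) := by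
    intro k hk
    have hsplit : ∑ j ∈ Finset.range k₀, α j + ∑ j ∈ Finset.Ico k₀ k, α j =
        ∑ j ∈ Finset.range k, α j := by
      rw [Finset.range_eq_Ico, Finset.range_eq_Ico]
      exact Finset.sum_Ico_consecutive _ (Nat.zero_le _) hk
    have := hsumbound k (fun i hi _ => hball i hi)
    linarith
  obtain ⟨k, hk1, hk2⟩ :=
    ((hαsum.eventually_gt_atTop ((∑ j ∈ Finset.range k₀, α j) + δ / (8 * M))).and
      (eventually_ge_atTop k₀)).exists
  exact absurd (hbdd k hk2) (not_lt.2 hk1.le)
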